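/- arXiv:0711.0451 — 2 statements merged into one kernel-verified Lean document; each statement's English description precedes it below -/
import Mathlib

section
/- Let 1 ≤ p < ∞ and suppose ∑_{k=1}^n a_k|d_k|^p < 1. Then there exists a unique f ∈ L_p[0,1] satisfying G(f) = f. -/
open MeasureTheory Set Filter
open scoped ENNReal NNReal

/-- Breakpoints: `alphaOf a k = α_k = ∑_{i=1}^{k-1} a_i`, so `α_1 = 0`. -/
noncomputable def alphaOf (a : ℕ → ℝ) (k : ℕ) : ℝ := ∑ i ∈ Finset.Ico 1 k, a i

/-- The similarity operator `G`: on `(α_k, α_{k+1})` it takes the value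
`β_k + d_k · f((x − α_k)/a_k)`, and `0` outside `⋃ (α_k, α_{k+1})`. -/
noncomputable def simOp (n : ℕ) (a d β : ℕ → ℝ) (f : ℝ → ℝ) : ℝ → ℝ :=
  fun x => ∑ k ∈ Finset.Icc 1 n,
    Set.indicator (Set.Ioo (alphaOf a k) (alphaOf a (k + 1)))
      (fun y => β k + d k * f ((y - alphaOf a k) / a k)) x

lemma map_affine (c α : ℝ) (hc : 0 < c) :
    Measure.map (fun x => (x - α) / c) (volume.restrict (Ioo α (α + c))) =
      ENNReal.ofReal c • volume.restrict (Ioo (0:ℝ) 1) := by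
  have hmeas : Measurable (fun x : ℝ => (x - α) / c) := by fun_prop
  have hpre : (fun x : ℝ => (x - α) / c) ⁻¹' (Ioo 0 1) = Ioo α (α + c) := by
    ext x
    simp only [mem_preimage, mem_Ioo]
    rw [lt_div_iff₀ hc, div_lt_one hc]
    constructor <;> intro h <;> constructor <;> linarith [h.1, h.2]
  rw [← hpre, ← Measure.restrict_map hmeas measurableSet_Ioo]
  have hfun : (fun x : ℝ => (x - α) / c) = (fun y : ℝ => c⁻¹ * y) ∘ (fun x : ℝ => x + (-α)) := by
    funext x; simp only [Function.comp_apply]; ring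
  rw [hfun, ← Measure.map_map (by fun_prop) (by fun_prop)]
  rw [map_add_right_eq_self (volume : Measure ℝ) (-α)]
  rw [Real.map_volume_mul_left (inv_ne_zero hc.ne')]
  rw [abs_of_pos (by positivity : (0:ℝ) < c⁻¹⁻¹), inv_inv, Measure.restrict_smul]

lemma lint_affine (c α : ℝ) (hc : 0 < c) (φ : ℝ → ℝ≥0∞) :
    ∫⁻ x in Ioo α (α + c), φ ((x - α) / c) ∂volume
      = ENNReal.ofReal c * ∫⁻ y in Ioo (0:ℝ) 1, φ y ∂volume := by
  have hc' : (c⁻¹ : ℝ) ≠ 0 := inv_ne_zero hc.ne'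
  set e : ℝ ≃ᵐ ℝ := (affineHomeomorph c⁻¹ (-(α/c)) hc').toMeasurableEquiv with he
  have hee : ∀ x, e x = (x - α) / c := by
    intro x
    show c⁻¹ * x + -(α/c) = (x - α) / c
    field_simp
    ring
  calc ∫⁻ x in Ioo α (α + c), φ ((x - α) / c) ∂volume
      = ∫⁻ x in Ioo α (α + c), φ (e x) ∂volume := by simp_rw [hee]
    _ = ∫⁻ y, φ y ∂(Measure.map e (volume.restrict (Ioo α (α + c)))) :=
        (lintegral_map_equiv φ e).symm
    _ = ENNReal.ofReal c * ∫⁻ y in Ioo (0:ℝ) 1, φ y ∂volume := by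
        have : Measure.map e (volume.restrict (Ioo α (α + c)))
            = Measure.map (fun x => (x - α) / c) (volume.restrict (Ioo α (α + c))) := by
          congr 1
          ext x
          exact hee x
        rw [this, map_affine c α hc, lintegral_smul_measure, smul_eq_mul]


lemma alphaOf_one (a : ℕ → ℝ) : alphaOf a 1 = 0 := by simp [alphaOf]

lemma alphaOf_succ (a : ℕ → ℝ) {k : ℕ} (hk : 1 ≤ k) :
    alphaOf a (k + 1) = alphaOf a k + a k := by
  simp [alphaOf, Finset.sum_Ico_succ_top hk]

lemma alphaOf_mono {n : ℕ} {a : ℕ → ℝ} (ha : ∀ k ∈ Finset.Icc 1 n, 0 < a k)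
    {i j : ℕ} (hij : i ≤ j) (hj : j ≤ n + 1) : alphaOf a i ≤ alphaOf a j := by
  unfold alphaOf
  apply Finset.sum_le_sum_of_subset_of_nonneg
  · exact Finset.Ico_subset_Ico le_rfl hij
  · intro l hl _
    rw [Finset.mem_Ico] at hl
    exact (ha l (Finset.mem_Icc.mpr ⟨hl.1, by omega⟩)).le

lemma alphaOf_top {n : ℕ} {a : ℕ → ℝ} (hsum : ∑ k ∈ Finset.Icc 1 n, a k = 1) :
    alphaOf a (n + 1) = 1 := by
  unfold alphaOf
  rwa [Finset.Ico_add_one_right_eq_Icc]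

lemma pairwise_disj {n : ℕ} {a : ℕ → ℝ} (ha : ∀ k ∈ Finset.Icc 1 n, 0 < a k) :
    Set.PairwiseDisjoint (↑(Finset.Icc 1 n) : Set ℕ)
      (fun k => Ioo (alphaOf a k) (alphaOf a (k + 1))) := by
  intro j hj k hk hjk
  simp only [Finset.coe_Icc, mem_Icc] at hj hk
  have key : ∀ j k : ℕ, 1 ≤ j ∧ j ≤ n → 1 ≤ k ∧ k ≤ n → j < k →
      Disjoint (Ioo (alphaOf a j) (alphaOf a (j+1))) (Ioo (alphaOf a k) (alphaOf a (k+1))) := by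
    intro j k hj hk h
    apply Set.disjoint_left.mpr
    intro x hxj hxk
    have h1 : alphaOf a (j + 1) ≤ alphaOf a k := alphaOf_mono ha (by omega) (by omega)
    exact absurd (hxj.2.trans_le h1) (not_lt.mpr hxk.1.le)
  rcases lt_or_gt_of_ne hjk with h | h
  · exact key j k hj hk h
  · exact (key k j hk hj h).symm

lemma Icc_ae_eq_biUnion {n : ℕ} {a : ℕ → ℝ} (ha : ∀ k ∈ Finset.Icc 1 n, 0 < a k)
    (hsum : ∑ k ∈ Finset.Icc 1 n, a k = 1) :
    (Icc (0:ℝ) 1 : Set ℝ) =ᵐ[volume] ⋃ k ∈ Finset.Icc 1 n, Ioo (alphaOf a k) (alphaOf a (k + 1)) := by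
  set U := ⋃ k ∈ Finset.Icc 1 n, Ioo (alphaOf a k) (alphaOf a (k + 1)) with hU
  have hsub : U ⊆ Icc (0:ℝ) 1 := by
    intro x hx
    simp only [hU, mem_iUnion, exists_prop] at hx
    obtain ⟨k, hk, hxk⟩ := hx
    rw [Finset.mem_Icc] at hk
    constructor
    · calc (0:ℝ) = alphaOf a 1 := (alphaOf_one a).symm
        _ ≤ alphaOf a k := alphaOf_mono ha hk.1 (by omega)
        _ ≤ x := hxk.1.le
    · calc x ≤ alphaOf a (k + 1) := hxk.2.le
        _ ≤ alphaOf a (n + 1) := alphaOf_mono ha (by omega) le_rfl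
        _ = 1 := alphaOf_top hsum
  have hUmeas : MeasurableSet U := by
    apply Finset.measurableSet_biUnion
    intro k _
    exact measurableSet_Ioo
  have hUvol : volume U = 1 := by
    rw [hU, measure_biUnion_finset (pairwise_disj ha) (fun k _ => measurableSet_Ioo)]
    have : ∀ k ∈ Finset.Icc 1 n, volume (Ioo (alphaOf a k) (alphaOf a (k + 1)))
        = ENNReal.ofReal (a k) := by
      intro k hk
      rw [Real.volume_Ioo, alphaOf_succ a (Finset.mem_Icc.mp hk).1]
      ring_nf
    rw [Finset.sum_congr rfl this, ← ENNReal.ofReal_sum_of_nonneg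
      (fun k hk => (ha k hk).le), hsum, ENNReal.ofReal_one]
  have hdiff : volume (Icc (0:ℝ) 1 \ U) = 0 := by
    rw [measure_diff hsub hUmeas.nullMeasurableSet (by simp [hUvol]), hUvol,
      Real.volume_Icc]
    simp
  rw [Filter.eventuallyEq_set]
  have h1 : ∀ᵐ x ∂(volume : Measure ℝ), x ∉ Icc (0:ℝ) 1 \ U :=
    (measure_eq_zero_iff_ae_notMem.mp hdiff)
  filter_upwards [h1] with x hx
  simp only [mem_diff, not_and, not_not] at hx
  constructor
  · intro h; exact hx h
  · intro h; exact hsub h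


lemma lint_simOp {n : ℕ} {a : ℕ → ℝ} (d β : ℕ → ℝ)
    (ha : ∀ k ∈ Finset.Icc 1 n, 0 < a k)
    (hsum : ∑ k ∈ Finset.Icc 1 n, a k = 1) (f : ℝ → ℝ) (q : ℝ) :
    ∫⁻ x in Icc (0:ℝ) 1, (‖simOp n a d β f x‖₊ : ℝ≥0∞) ^ q ∂volume
      = ∑ k ∈ Finset.Icc 1 n, ENNReal.ofReal (a k) *
          ∫⁻ y in Ioo (0:ℝ) 1, (‖β k + d k * f y‖₊ : ℝ≥0∞) ^ q ∂volume := by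
  rw [Measure.restrict_congr_set (Icc_ae_eq_biUnion ha hsum)]
  rw [lintegral_biUnion_finset (pairwise_disj ha) (fun k _ => measurableSet_Ioo)]
  apply Finset.sum_congr rfl
  intro k hk
  have hk1 : 1 ≤ k := (Finset.mem_Icc.mp hk).1
  have hpt : ∀ x ∈ Ioo (alphaOf a k) (alphaOf a (k+1)),
      simOp n a d β f x = β k + d k * f ((x - alphaOf a k) / a k) := by
    intro x hx
    unfold simOp
    rw [Finset.sum_eq_single_of_mem k hk (fun j hj hjk => Set.indicator_of_notMem
      (Set.disjoint_right.mp (pairwise_disj ha (Finset.mem_coe.mpr hj)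
        (Finset.mem_coe.mpr hk) hjk) hx) _)]
    exact Set.indicator_of_mem hx _
  rw [setLIntegral_congr_fun measurableSet_Ioo (
    (fun x hx => by rw [hpt x hx]))]
  rw [alphaOf_succ a hk1]
  exact lint_affine (a k) (alphaOf a k) (ha k hk) (fun y => (‖β k + d k * f y‖₊ : ℝ≥0∞) ^ q)

lemma measurable_simOp {f : ℝ → ℝ} (hf : Measurable f) (n : ℕ) (a d β : ℕ → ℝ) :
    Measurable (simOp n a d β f) := by
  unfold simOp
  apply Finset.measurable_sum
  intro k _
  exact (measurable_const.add ((hf.comp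
    ((measurable_id.sub measurable_const).div_const _)).const_mul _)).indicator
    measurableSet_Ioo

instance : IsFiniteMeasure ((volume : Measure ℝ).restrict (Ioo (0:ℝ) 1)) := by
  constructor
  rw [Measure.restrict_apply_univ, Real.volume_Ioo]
  simp

lemma memℒp_affine_piece {p : ℝ≥0∞} {f : ℝ → ℝ}
    (hf : MemLp f p (volume.restrict (Icc (0:ℝ) 1))) (c e : ℝ) :
    MemLp (fun y => c + e * f y) p (volume.restrict (Ioo (0:ℝ) 1)) := by
  have hf' : MemLp f p (volume.restrict (Ioo (0:ℝ) 1)) :=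
    hf.mono_measure (Measure.restrict_mono Ioo_subset_Icc_self le_rfl)
  exact (memLp_const c).add (hf'.const_mul e)

lemma memℒp_simOp {n : ℕ} {a : ℕ → ℝ} (d β : ℕ → ℝ)
    (ha : ∀ k ∈ Finset.Icc 1 n, 0 < a k)
    (hsum : ∑ k ∈ Finset.Icc 1 n, a k = 1)
    {p : ℝ≥0∞} (hp1 : 1 ≤ p) (hpt : p ≠ ⊤) {f : ℝ → ℝ} (hfm : Measurable f)
    (hf : MemLp f p (volume.restrict (Icc (0:ℝ) 1))) :
    MemLp (simOp n a d β f) p (volume.restrict (Icc (0:ℝ) 1)) := by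
  have hp0 : p ≠ 0 := by positivity
  refine ⟨(measurable_simOp hfm n a d β).aestronglyMeasurable, ?_⟩
  rw [eLpNorm_lt_top_iff_lintegral_rpow_enorm_lt_top hp0 hpt]
  have : (∫⁻ x, (‖simOp n a d β f x‖₊ : ℝ≥0∞) ^ p.toReal
      ∂(volume.restrict (Icc (0:ℝ) 1)))
      = ∑ k ∈ Finset.Icc 1 n, ENNReal.ofReal (a k) *
        ∫⁻ y in Ioo (0:ℝ) 1, (‖β k + d k * f y‖₊ : ℝ≥0∞) ^ p.toReal ∂volume :=
    lint_simOp d β ha hsum f p.toReal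
  simp only [enorm_eq_nnnorm]
  rw [this]
  apply ENNReal.sum_lt_top.mpr
  intro k _
  apply ENNReal.mul_lt_top ENNReal.ofReal_lt_top
  exact (eLpNorm_lt_top_iff_lintegral_rpow_enorm_lt_top hp0 hpt).mp
    (memℒp_affine_piece hf (β k) (d k)).2

lemma simOp_congr_ae {n : ℕ} {a : ℕ → ℝ} (d β : ℕ → ℝ)
    (ha : ∀ k ∈ Finset.Icc 1 n, 0 < a k) {f g : ℝ → ℝ}
    (hfg : f =ᵐ[volume.restrict (Ioo (0:ℝ) 1)] g) :
    simOp n a d β f =ᵐ[volume.restrict (Icc (0:ℝ) 1)] simOp n a d β g := by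
  set ν := (volume : Measure ℝ).restrict (Ioo (0:ℝ) 1)
  set N := toMeasurable ν {y | f y ≠ g y} with hNdef
  have hNm : MeasurableSet N := measurableSet_toMeasurable _ _
  have hNnull : ν N = 0 := by
    rw [measure_toMeasurable]
    exact hfg
  have hsubN : {y | f y ≠ g y} ⊆ N := subset_toMeasurable _ _
  -- the bad set in [0,1]
  set B := ⋃ k ∈ Finset.Icc 1 n,
    ((fun x => (x - alphaOf a k) / a k) ⁻¹' N ∩ Ioo (alphaOf a k) (alphaOf a (k+1))) with hBdef
  have hBnull : volume B = 0 := by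
    rw [hBdef]
    refine measure_biUnion_null_iff (Finset.countable_toSet _) |>.mpr ?_
    intro k hk
    rw [Finset.mem_coe, Finset.mem_Icc] at hk
    have hmeas : Measurable (fun x : ℝ => (x - alphaOf a k) / a k) := by fun_prop
    have : (fun x => (x - alphaOf a k) / a k) ⁻¹' N ∩ Ioo (alphaOf a k) (alphaOf a (k+1))
        = (fun x => (x - alphaOf a k) / a k) ⁻¹' N ∩ Ioo (alphaOf a k) (alphaOf a k + a k) := by
      rw [alphaOf_succ a hk.1]
    rw [this, ← Measure.restrict_apply' measurableSet_Ioo]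
    have hmap := map_affine (a k) (alphaOf a k) (ha k (Finset.mem_Icc.mpr hk))
    have := Measure.map_apply hmeas hNm (μ := volume.restrict
      (Ioo (alphaOf a k) (alphaOf a k + a k)))
    rw [hmap] at this
    rw [← this]
    rw [Measure.smul_apply, show (volume.restrict (Ioo (0:ℝ) 1)) N = 0 from hNnull, smul_zero]
  have hae : ∀ᵐ x ∂(volume.restrict (Icc (0:ℝ) 1)), x ∉ B := by
    apply ae_restrict_of_ae
    exact measure_eq_zero_iff_ae_notMem.mp hBnull
  filter_upwards [hae] with x hx
  unfold simOp
  apply Finset.sum_congr rfl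
  intro k hk
  by_cases hxk : x ∈ Ioo (alphaOf a k) (alphaOf a (k+1))
  · rw [Set.indicator_of_mem hxk, Set.indicator_of_mem hxk]
    have hnotN : (x - alphaOf a k) / a k ∉ N := by
      intro hmem
      exact hx (Set.mem_biUnion hk ⟨hmem, hxk⟩)
    have : f ((x - alphaOf a k) / a k) = g ((x - alphaOf a k) / a k) := by
      by_contra hne
      exact hnotN (hsubN hne)
    rw [this]
  · rw [Set.indicator_of_notMem hxk, Set.indicator_of_notMem hxk]

lemma simOp_sub (n : ℕ) (a d β : ℕ → ℝ) (f g : ℝ → ℝ) :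
    simOp n a d β f - simOp n a d β g
      = simOp n a d (fun _ => 0) (fun y => f y - g y) := by
  funext x
  simp only [Pi.sub_apply, simOp]
  rw [← Finset.sum_sub_distrib]
  apply Finset.sum_congr rfl
  intro k _
  by_cases hx : x ∈ Ioo (alphaOf a k) (alphaOf a (k+1))
  · simp only [Set.indicator_of_mem hx]
    ring
  · simp only [Set.indicator_of_notMem hx, sub_zero]

lemma eLpNorm_simOp_sub_le {n : ℕ} {a : ℕ → ℝ} (d β : ℕ → ℝ)
    (ha : ∀ k ∈ Finset.Icc 1 n, 0 < a k)
    (hsum : ∑ k ∈ Finset.Icc 1 n, a k = 1)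
    {p : ℝ≥0∞} (hp1 : 1 ≤ p) (hpt : p ≠ ⊤) (f g : ℝ → ℝ) :
    eLpNorm (simOp n a d β f - simOp n a d β g) p (volume.restrict (Icc (0:ℝ) 1))
      ≤ (ENNReal.ofReal (∑ k ∈ Finset.Icc 1 n, a k * |d k| ^ p.toReal)) ^ (1 / p.toReal)
        * eLpNorm (fun y => f y - g y) p (volume.restrict (Icc (0:ℝ) 1)) := by
  have hp0 : p ≠ 0 := by positivity
  have hq : 0 < p.toReal := ENNReal.toReal_pos hp0 hpt
  set q := p.toReal
  rw [eLpNorm_eq_lintegral_rpow_enorm_toReal hp0 hpt, eLpNorm_eq_lintegral_rpow_enorm_toReal hp0 hpt,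
    simOp_sub]
  have key : (∫⁻ x, (‖simOp n a d (fun _ => 0) (fun y => f y - g y) x‖₊ : ℝ≥0∞) ^ q
        ∂(volume.restrict (Icc (0:ℝ) 1)))
      ≤ ENNReal.ofReal (∑ k ∈ Finset.Icc 1 n, a k * |d k| ^ q)
        * ∫⁻ y, (‖f y - g y‖₊ : ℝ≥0∞) ^ q ∂(volume.restrict (Icc (0:ℝ) 1)) := by
    have h1 := lint_simOp d (fun _ => 0) ha hsum (fun y => f y - g y) q
    rw [h1]
    have h2 : ∀ k ∈ Finset.Icc 1 n,
        ENNReal.ofReal (a k) * ∫⁻ y in Ioo (0:ℝ) 1,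
          (‖(0:ℝ) + d k * (f y - g y)‖₊ : ℝ≥0∞) ^ q ∂volume
        ≤ ENNReal.ofReal (a k * |d k| ^ q)
          * ∫⁻ y, (‖f y - g y‖₊ : ℝ≥0∞) ^ q ∂(volume.restrict (Icc (0:ℝ) 1)) := by
      intro k hk
      have hptw : ∀ y : ℝ, (‖(0:ℝ) + d k * (f y - g y)‖₊ : ℝ≥0∞) ^ q
          = ENNReal.ofReal (|d k| ^ q) * (‖f y - g y‖₊ : ℝ≥0∞) ^ q := by
        intro y
        rw [zero_add, nnnorm_mul, ENNReal.coe_mul,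
          ENNReal.mul_rpow_of_nonneg _ _ hq.le]
        congr 1
        rw [← enorm_eq_nnnorm, Real.enorm_eq_ofReal_abs, ← ENNReal.ofReal_rpow_of_nonneg (abs_nonneg _) hq.le]
      simp_rw [hptw]
      rw [lintegral_const_mul' _ _ ENNReal.ofReal_ne_top]
      have hmono : (∫⁻ y in Ioo (0:ℝ) 1, (‖f y - g y‖₊ : ℝ≥0∞) ^ q ∂volume)
          ≤ ∫⁻ y, (‖f y - g y‖₊ : ℝ≥0∞) ^ q ∂(volume.restrict (Icc (0:ℝ) 1)) :=
        lintegral_mono' (Measure.restrict_mono Ioo_subset_Icc_self le_rfl) le_rfl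
      calc ENNReal.ofReal (a k) * (ENNReal.ofReal (|d k| ^ q)
            * ∫⁻ y in Ioo (0:ℝ) 1, (‖f y - g y‖₊ : ℝ≥0∞) ^ q ∂volume)
          ≤ ENNReal.ofReal (a k) * (ENNReal.ofReal (|d k| ^ q)
            * ∫⁻ y, (‖f y - g y‖₊ : ℝ≥0∞) ^ q ∂(volume.restrict (Icc (0:ℝ) 1))) := by
            exact mul_le_mul_right (mul_le_mul_right hmono _) _
        _ = ENNReal.ofReal (a k * |d k| ^ q)
            * ∫⁻ y, (‖f y - g y‖₊ : ℝ≥0∞) ^ q ∂(volume.restrict (Icc (0:ℝ) 1)) := by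
            rw [← mul_assoc, ← ENNReal.ofReal_mul (ha k hk).le]
    calc ∑ k ∈ Finset.Icc 1 n, ENNReal.ofReal (a k) * ∫⁻ y in Ioo (0:ℝ) 1,
          (‖(0:ℝ) + d k * (f y - g y)‖₊ : ℝ≥0∞) ^ q ∂volume
        ≤ ∑ k ∈ Finset.Icc 1 n, ENNReal.ofReal (a k * |d k| ^ q)
          * ∫⁻ y, (‖f y - g y‖₊ : ℝ≥0∞) ^ q ∂(volume.restrict (Icc (0:ℝ) 1)) :=
          Finset.sum_le_sum h2
      _ = (∑ k ∈ Finset.Icc 1 n, ENNReal.ofReal (a k * |d k| ^ q))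
          * ∫⁻ y, (‖f y - g y‖₊ : ℝ≥0∞) ^ q ∂(volume.restrict (Icc (0:ℝ) 1)) :=
          (Finset.sum_mul _ _ _).symm
      _ = ENNReal.ofReal (∑ k ∈ Finset.Icc 1 n, a k * |d k| ^ q)
          * ∫⁻ y, (‖f y - g y‖₊ : ℝ≥0∞) ^ q ∂(volume.restrict (Icc (0:ℝ) 1)) := by
          rw [← ENNReal.ofReal_sum_of_nonneg]
          intro k hk
          exact mul_nonneg (ha k hk).le (by positivity)
  calc (∫⁻ x, (‖simOp n a d (fun _ => 0) (fun y => f y - g y) x‖₊ : ℝ≥0∞) ^ q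
        ∂(volume.restrict (Icc (0:ℝ) 1))) ^ (1 / q)
      ≤ (ENNReal.ofReal (∑ k ∈ Finset.Icc 1 n, a k * |d k| ^ q)
        * ∫⁻ y, (‖f y - g y‖₊ : ℝ≥0∞) ^ q ∂(volume.restrict (Icc (0:ℝ) 1))) ^ (1 / q) :=
        ENNReal.rpow_le_rpow key (by positivity)
    _ = (ENNReal.ofReal (∑ k ∈ Finset.Icc 1 n, a k * |d k| ^ q)) ^ (1 / q)
        * (∫⁻ y, (‖f y - g y‖₊ : ℝ≥0∞) ^ q ∂(volume.restrict (Icc (0:ℝ) 1))) ^ (1 / q) :=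
        ENNReal.mul_rpow_of_nonneg _ _ (by positivity)


/-- if `1 ≤ p < ∞` and `∑ a_k |d_k|^p < 1`, then there is a unique (up to
a.e. equality) function `f ∈ L_p[0,1]` with `G(f) = f`. -/
theorem simOp_exists_unique_fixedPoint (n : ℕ) (hn : 1 < n) (a d β : ℕ → ℝ)
    (ha : ∀ k ∈ Finset.Icc 1 n, 0 < a k)
    (hsum : ∑ k ∈ Finset.Icc 1 n, a k = 1)
    (p : ℝ≥0∞) (hp1 : 1 ≤ p) (hpt : p ≠ ⊤)
    (hcontr : ∑ k ∈ Finset.Icc 1 n, a k * |d k| ^ p.toReal < 1) :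
    ∃ f : ℝ → ℝ, MemLp f p (volume.restrict (Set.Icc (0:ℝ) 1)) ∧
      f =ᵐ[volume.restrict (Set.Icc (0:ℝ) 1)] simOp n a d β f ∧
      ∀ g : ℝ → ℝ, MemLp g p (volume.restrict (Set.Icc (0:ℝ) 1)) →
        g =ᵐ[volume.restrict (Set.Icc (0:ℝ) 1)] simOp n a d β g →
        g =ᵐ[volume.restrict (Set.Icc (0:ℝ) 1)] f := by
  haveI : Fact (1 ≤ p) := ⟨hp1⟩
  have hp0 : p ≠ 0 := by positivity
  have hq : 0 < p.toReal := ENNReal.toReal_pos hp0 hpt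
  set μ := (volume : Measure ℝ).restrict (Set.Icc (0:ℝ) 1) with hμ
  set C : ℝ≥0∞ :=
    (ENNReal.ofReal (∑ k ∈ Finset.Icc 1 n, a k * |d k| ^ p.toReal)) ^ (1 / p.toReal) with hC
  have hC1 : C < 1 :=
    ENNReal.rpow_lt_one (ENNReal.ofReal_lt_one.mpr hcontr) (by positivity)
  have hCt : C ≠ ⊤ := (hC1.trans ENNReal.one_lt_top).ne
  set K : ℝ≥0 := C.toNNReal with hKdef
  have hKC : (K : ℝ≥0∞) = C := ENNReal.coe_toNNReal hCt
  have hK1 : K < 1 := by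
    rw [← ENNReal.coe_lt_one_iff, hKC]; exact hC1
  -- measurable representatives
  have hmkm : ∀ F : Lp ℝ p μ, Measurable ((Lp.aestronglyMeasurable F).mk F) :=
    fun F => (Lp.aestronglyMeasurable F).stronglyMeasurable_mk.measurable
  have hmkae : ∀ F : Lp ℝ p μ, (F : ℝ → ℝ) =ᵐ[μ] (Lp.aestronglyMeasurable F).mk F :=
    fun F => (Lp.aestronglyMeasurable F).ae_eq_mk
  have hmkLp : ∀ F : Lp ℝ p μ, MemLp ((Lp.aestronglyMeasurable F).mk F) p μ :=
    fun F => (Lp.memLp F).ae_eq (hmkae F)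
  have hioo : (volume : Measure ℝ).restrict (Set.Ioo (0:ℝ) 1) ≤ μ :=
    Measure.restrict_mono Ioo_subset_Icc_self le_rfl
  set T : Lp ℝ p μ → Lp ℝ p μ := fun F =>
    (memℒp_simOp d β ha hsum hp1 hpt (hmkm F) (hmkLp F)).toLp _ with hT
  have hTcoe : ∀ F : Lp ℝ p μ,
      (T F : ℝ → ℝ) =ᵐ[μ] simOp n a d β ((Lp.aestronglyMeasurable F).mk F) :=
    fun F => MemLp.coeFn_toLp _
  have hLip : LipschitzWith K T := by
    intro F G
    rw [Lp.edist_def, Lp.edist_def, hKC]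
    have h1 : (T F : ℝ → ℝ) - (T G : ℝ → ℝ) =ᵐ[μ]
        simOp n a d β ((Lp.aestronglyMeasurable F).mk F)
          - simOp n a d β ((Lp.aestronglyMeasurable G).mk G) :=
      (hTcoe F).sub (hTcoe G)
    have h2 : (fun y => (Lp.aestronglyMeasurable F).mk F y
        - (Lp.aestronglyMeasurable G).mk G y) =ᵐ[μ] (F : ℝ → ℝ) - (G : ℝ → ℝ) :=
      ((hmkae F).symm).sub ((hmkae G).symm)
    calc eLpNorm ((T F : ℝ → ℝ) - (T G : ℝ → ℝ)) p μ
        = eLpNorm (simOp n a d β ((Lp.aestronglyMeasurable F).mk F)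
            - simOp n a d β ((Lp.aestronglyMeasurable G).mk G)) p μ :=
          eLpNorm_congr_ae h1
      _ ≤ C * eLpNorm (fun y => (Lp.aestronglyMeasurable F).mk F y
            - (Lp.aestronglyMeasurable G).mk G y) p μ :=
          eLpNorm_simOp_sub_le d β ha hsum hp1 hpt _ _
      _ = C * eLpNorm ((F : ℝ → ℝ) - (G : ℝ → ℝ)) p μ := by
          rw [eLpNorm_congr_ae h2]
  have hCW : ContractingWith K T := ⟨hK1, hLip⟩
  set F₀ : Lp ℝ p μ := hCW.fixedPoint T with hF₀
  have hfix : T F₀ = F₀ := hCW.fixedPoint_isFixedPt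
  refine ⟨(F₀ : ℝ → ℝ), Lp.memLp F₀, ?_, ?_⟩
  · have h1 : (F₀ : ℝ → ℝ) =ᵐ[μ] simOp n a d β ((Lp.aestronglyMeasurable F₀).mk F₀) := by
      conv_lhs => rw [← hfix]
      exact hTcoe F₀
    have h2 : simOp n a d β ((Lp.aestronglyMeasurable F₀).mk F₀)
        =ᵐ[μ] simOp n a d β (F₀ : ℝ → ℝ) :=
      simOp_congr_ae d β ha (((hmkae F₀).symm).filter_mono (ae_mono hioo))
    exact h1.trans h2
  · intro g hg hgfix
    set G : Lp ℝ p μ := hg.toLp g with hG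
    have hGg : (G : ℝ → ℝ) =ᵐ[μ] g := MemLp.coeFn_toLp hg
    have hfixG : Function.IsFixedPt T G := by
      show T G = G
      rw [hT]
      have hmkg : (Lp.aestronglyMeasurable G).mk G =ᵐ[μ] g := ((hmkae G).symm).trans hGg
      have h3 : simOp n a d β ((Lp.aestronglyMeasurable G).mk G) =ᵐ[μ] simOp n a d β g :=
        simOp_congr_ae d β ha (hmkg.filter_mono (ae_mono hioo))
      have h4 : simOp n a d β ((Lp.aestronglyMeasurable G).mk G) =ᵐ[μ] g :=
        h3.trans hgfix.symm
      rw [MemLp.toLp_eq_toLp_iff _ hg]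
      exact h4
    have hGF : G = F₀ := hCW.fixedPoint_unique hfixG
    exact (hGg.symm).trans (by rw [hGF])
end

section
/- Let f ∈ L_p[0,1] (1 ≤ p < ∞) be self-similar of zero spectral order with d_{k̂} ≠ 1. Then for every m ≥ 1 and every index i ≠ k̂, f equals the constant d_{k̂}^{m−1}·(β_{k̂}/(d_{k̂}−1) + β_i) − β_{k̂}/(d_{k̂}−1) almost everywhere on the interval I(m,i) = S^{m−1}([α_i, α_{i+1}]), where S(x) = a_{k̂}x + α_{k̂}. -/
open MeasureTheory Set Filter
open scoped ENNReal NNReal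

/-- Image of a null set under an affine map is null. -/
lemma affine_image_null {c b : ℝ} (hc : c ≠ 0) {N : Set ℝ} (hN : volume N = 0) :
    volume ((fun x => c * x + b) '' N) = 0 := by
  obtain ⟨N', hNN', hN'm, hN'0⟩ := exists_measurable_superset_of_null hN
  have himg : (fun x => c * x + b) '' N ⊆ (fun y => c⁻¹ * (y - b)) ⁻¹' N' := by
    rintro _ ⟨x, hx, rfl⟩
    simp only [mem_preimage, add_sub_cancel_right]
    rw [inv_mul_cancel_left₀ hc]
    exact hNN' hx
  refine measure_mono_null himg ?_
  have : (fun y : ℝ => c⁻¹ * (y - b)) ⁻¹' N' = (· + (-b)) ⁻¹' ((c⁻¹ * ·) ⁻¹' N') := by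
    ext y; simp [sub_eq_add_neg]
  rw [this, measure_preimage_add_right, Real.volume_preimage_mul_left (inv_ne_zero hc), hN'0,
    mul_zero]

/-- Image of a closed interval under an increasing affine map. -/
lemma affine_image_Icc {c b u v : ℝ} (hc : 0 < c) :
    (fun x => c * x + b) '' Icc u v = Icc (c * u + b) (c * v + b) := by
  ext y
  constructor
  · rintro ⟨x, hx, rfl⟩
    simp only []
    exact ⟨by nlinarith [hx.1], by nlinarith [hx.2]⟩
  · rintro ⟨h1, h2⟩
    refine ⟨c⁻¹ * (y - b), ⟨?_, ?_⟩, ?_⟩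
    · rw [le_inv_mul_iff₀ hc]; linarith
    · rw [inv_mul_le_iff₀ hc]; linarith
    · simp only []; rw [mul_inv_cancel_left₀ hc.ne']; ring

/-- if `d_{k̂} ≠ 1`, then on each interval `I(m,i) = S^{m−1}([α_i, α_{i+1}])`
(`i ≠ k̂`, `m ≥ 1`) the self-similar function of zero spectral order is a.e. equal to the
constant `d_{k̂}^{m−1}(β_{k̂}/(d_{k̂}−1) + β_i) − β_{k̂}/(d_{k̂}−1)`. -/
theorem selfSimilar_zeroOrder_const_on_Imi
    (n : ℕ) (hn : 1 < n) (a d β : ℕ → ℝ)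
    (ha : ∀ k ∈ Finset.Icc 1 n, 0 < a k)
    (hsum : ∑ k ∈ Finset.Icc 1 n, a k = 1)
    (p : ℝ≥0∞) (hp1 : 1 ≤ p) (hpt : p ≠ ⊤)
    (khat : ℕ) (hk : khat ∈ Finset.Icc 1 n)
    (hdk : d khat ≠ 0)
    (hd0 : ∀ k ∈ Finset.Icc 1 n, k ≠ khat → d k = 0)
    (hβ : ∃ k ∈ Finset.Icc 1 n, β k ≠ 0)
    (hcontr : a khat * |d khat| ^ p.toReal < 1)
    (f : ℝ → ℝ) (hf : MemLp f p (volume.restrict (Set.Icc (0:ℝ) 1)))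
    (hfix : f =ᵐ[volume.restrict (Set.Icc (0:ℝ) 1)] simOp n a d β f)
    (hdne : d khat ≠ 1)
    (S : ℝ → ℝ) (hS : S = fun x => a khat * x + alphaOf a khat) :
    ∀ m : ℕ, 1 ≤ m → ∀ i ∈ Finset.Icc 1 n, i ≠ khat →
      f =ᵐ[volume.restrict ((S^[m - 1]) '' Set.Icc (alphaOf a i) (alphaOf a (i + 1)))]
        (fun _ => d khat ^ (m - 1) * (β khat / (d khat - 1) + β i) - β khat / (d khat - 1)) := by
  intro m hm i hi hine
  set A := alphaOf a with hA
  set B := β khat / (d khat - 1) with hB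
  obtain ⟨hk1, hkn⟩ := Finset.mem_Icc.mp hk
  obtain ⟨hi1, hin⟩ := Finset.mem_Icc.mp hi
  have hak : 0 < a khat := ha khat hk
  have hd1 : d khat - 1 ≠ 0 := sub_ne_zero.mpr hdne
  -- basic facts about α
  have hA1 : A 1 = 0 := by simp [hA, alphaOf]
  have hAn : A (n + 1) = 1 := by
    rw [hA, alphaOf, Finset.Ico_add_one_right_eq_Icc]; exact hsum
  have hmono : ∀ j k : ℕ, 1 ≤ j → j ≤ k → k ≤ n + 1 → A j ≤ A k := by
    intro j k h1j hjk hkn1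
    have hcons := Finset.sum_Ico_consecutive a h1j hjk
    have hnn : 0 ≤ ∑ x ∈ Finset.Ico j k, a x := by
      refine Finset.sum_nonneg fun x hx => ?_
      obtain ⟨hx1, hx2⟩ := Finset.mem_Ico.mp hx
      exact (ha x (Finset.mem_Icc.mpr ⟨le_trans h1j hx1, by omega⟩)).le
    simp only [hA, alphaOf]
    linarith
  have hstep : ∀ k : ℕ, 1 ≤ k → A (k + 1) = A k + a k := by
    intro k h1k
    simp only [hA, alphaOf]
    rw [Finset.sum_Ico_succ_top h1k]
  have hSx : ∀ x, S x = a khat * x + A khat := by intro x; rw [hS]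
  have hSfun : S = fun x => a khat * x + A khat := hS
  -- the key self-similarity relation on each interval
  have key : ∀ k ∈ Finset.Icc 1 n,
      f =ᵐ[volume.restrict (Icc (A k) (A (k + 1)))]
        fun x => β k + d k * f ((x - A k) / a k) := by
    intro k hkmem
    obtain ⟨h1k, hknn⟩ := Finset.mem_Icc.mp hkmem
    rw [← Measure.restrict_congr_set Ioo_ae_eq_Icc]
    have hsub : Ioo (A k) (A (k + 1)) ⊆ Icc (0 : ℝ) 1 := by
      intro x hx
      constructor
      · have := hmono 1 k le_rfl h1k (by omega); rw [hA1] at this; linarith [hx.1]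
      · have := hmono (k + 1) (n + 1) (by omega) (by omega) le_rfl
        rw [hAn] at this; linarith [hx.2]
    have h1 := ae_restrict_of_ae_restrict_of_subset hsub hfix
    have h2 : ∀ᵐ x ∂volume.restrict (Ioo (A k) (A (k + 1))), x ∈ Ioo (A k) (A (k + 1)) :=
      ae_restrict_mem measurableSet_Ioo
    filter_upwards [h1, h2] with x hfx hx
    rw [hfx]
    unfold simOp
    have hothers : ∀ j ∈ Finset.Icc 1 n, j ≠ k →
        Set.indicator (Set.Ioo (A j) (A (j + 1)))
          (fun y => β j + d j * f ((y - A j) / a j)) x = 0 := by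
      intro j hj hjk
      obtain ⟨h1j, hjn⟩ := Finset.mem_Icc.mp hj
      apply Set.indicator_of_notMem
      intro hxj
      rcases lt_or_gt_of_ne hjk with h | h
      · have : A (j + 1) ≤ A k := hmono (j + 1) k (by omega) h (by omega)
        linarith [hxj.2, hx.1]
      · have : A (k + 1) ≤ A j := hmono (k + 1) j (by omega) h (by omega)
        linarith [hxj.1, hx.2]
    rw [Finset.sum_eq_single_of_mem k hkmem hothers, Set.indicator_of_mem hx]
  -- base: f is constant β i a.e. on [α_i, α_{i+1}]
  have base : f =ᵐ[volume.restrict (Icc (A i) (A (i + 1)))] fun _ => β i := by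
    filter_upwards [key i hi] with x hx
    rw [hx, hd0 i hi hine]; ring
  -- iterates of S stay in [0,1] and are monotone
  have hAk0 : 0 ≤ A khat := by
    have := hmono 1 khat le_rfl hk1 (by omega); linarith [hA1]
  have hAk1 : A (khat + 1) ≤ 1 := by
    have := hmono (khat + 1) (n + 1) (by omega) (by omega) le_rfl; linarith [hAn]
  have hiterbd : ∀ M : ℕ, ∀ x : ℝ, 0 ≤ x → x ≤ 1 → 0 ≤ (S^[M]) x ∧ (S^[M]) x ≤ 1 := by
    intro M
    induction M with
    | zero => intro x h0 h1; simpa using ⟨h0, h1⟩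
    | succ M ih =>
      intro x h0 h1
      rw [Function.iterate_succ_apply']
      obtain ⟨ih0, ih1⟩ := ih x h0 h1
      rw [hSx]
      constructor
      · nlinarith
      · have := hstep khat hk1; nlinarith
  have hitermono : ∀ M : ℕ, ∀ x y : ℝ, x ≤ y → (S^[M]) x ≤ (S^[M]) y := by
    intro M
    induction M with
    | zero => intro x y h; simpa using h
    | succ M ih =>
      intro x y h
      rw [Function.iterate_succ_apply', Function.iterate_succ_apply', hSx, hSx]
      have := ih x y h
      nlinarith
  have hAi0 : 0 ≤ A i := by have := hmono 1 i le_rfl hi1 (by omega); linarith [hA1]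
  have hAi1 : A (i + 1) ≤ 1 := by
    have := hmono (i + 1) (n + 1) (by omega) (by omega) le_rfl; linarith [hAn]
  have hAii : A i ≤ A (i + 1) := hmono i (i + 1) hi1 (by omega) (by omega)
  have hAi1' : A i ≤ 1 := le_trans hAii hAi1
  have hAi10 : 0 ≤ A (i + 1) := le_trans hAi0 hAii
  -- main induction
  have main : ∀ M : ℕ,
      f =ᵐ[volume.restrict (Icc ((S^[M]) (A i)) ((S^[M]) (A (i + 1))))]
        fun _ => d khat ^ M * (B + β i) - B := by
    intro M
    induction M with
    | zero =>
      simp only [Function.iterate_zero, id_eq, pow_zero, one_mul, add_sub_cancel_left]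
      exact base
    | succ M ih =>
      rw [Function.iterate_succ_apply', Function.iterate_succ_apply']
      set u := (S^[M]) (A i) with hu
      set v := (S^[M]) (A (i + 1)) with hv
      have huv : u ≤ v := hitermono M _ _ hAii
      have hu0 : 0 ≤ u := (hiterbd M _ hAi0 hAi1').1
      have hv1 : v ≤ 1 := (hiterbd M _ hAi10 hAi1).2
      have hsub2 : Icc (S u) (S v) ⊆ Icc (A khat) (A (khat + 1)) := by
        intro x hx
        obtain ⟨hx1, hx2⟩ := hx
        rw [hSx] at hx1; rw [hSx] at hx2
        have hs := hstep khat hk1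
        constructor
        · nlinarith
        · nlinarith
      have hkey := ae_restrict_of_ae_restrict_of_subset hsub2 (key khat hk)
      have ih' : ∀ᵐ x ∂volume, x ∈ Icc u v → f x = d khat ^ M * (B + β i) - B :=
        (ae_restrict_iff' measurableSet_Icc).mp ih
      have hNnull : volume {x | ¬(x ∈ Icc u v → f x = d khat ^ M * (B + β i) - B)} = 0 :=
        ae_iff.mp ih'
      have hNim : volume ((fun x => a khat * x + A khat) ''
          {x | ¬(x ∈ Icc u v → f x = d khat ^ M * (B + β i) - B)}) = 0 :=
        affine_image_null hak.ne' hNnull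
      have hNim' : ∀ᵐ x ∂volume.restrict (Icc (S u) (S v)),
          x ∉ (fun x => a khat * x + A khat) ''
            {x | ¬(x ∈ Icc u v → f x = d khat ^ M * (B + β i) - B)} :=
        ae_restrict_of_ae (measure_eq_zero_iff_ae_notMem.mp hNim)
      filter_upwards [hkey, ae_restrict_mem measurableSet_Icc, hNim'] with x hfx hxmem hxnotim
      have hy : (x - A khat) / a khat ∈ Icc u v := by
        obtain ⟨hx1, hx2⟩ := hxmem
        rw [hSx] at hx1; rw [hSx] at hx2
        constructor
        · rw [le_div_iff₀ hak]; linarith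
        · rw [div_le_iff₀ hak]; linarith
      have hSy : a khat * ((x - A khat) / a khat) + A khat = x := by
        field_simp
        ring
      have hyN : (x - A khat) / a khat ∈ Icc u v →
          f ((x - A khat) / a khat) = d khat ^ M * (B + β i) - B := by
        by_contra hcon
        exact hxnotim ⟨(x - A khat) / a khat, hcon, hSy⟩
      have hfy := hyN hy
      rw [hfx, hfy, hB]
      field_simp
      ring
  -- image of the interval under iterates of S
  have himg : ∀ M : ℕ, (S^[M]) '' Icc (A i) (A (i + 1)) =
      Icc ((S^[M]) (A i)) ((S^[M]) (A (i + 1))) := by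
    intro M
    induction M with
    | zero => simp
    | succ M ihM =>
      rw [Function.iterate_succ', Set.image_comp, ihM, hSfun,
        affine_image_Icc hak]
      rfl
  rw [himg (m - 1)]
  exact main (m - 1)
end
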